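/- For 0 ≤ μ ≤ 1, the two-qubit pure state |ψ⟩ = √((1−μ)/2)(|01⟩+|10⟩) + √(μ/2)(|01⟩−|10⟩) satisfies Tr(P_s ψ) = 1−μ, Tr(P_as ψ) = μ, and D(ψ_A, ψ_B) = 2√(μ(1−μ)), so the bound D(ψ_A,ψ_B) ≤ 2√(Tr(P_as ψ)Tr(P_s ψ)) is attained with equality. -/

import Mathlib

open scoped Matrix Kronecker ComplexOrder

noncomputable section

namespace QEMD

variable {m n : Type*} [Fintype m] [Fintype n] [DecidableEq m] [DecidableEq n]

/-- Total square root: the PSD square root if `A` is PSD, else `0`. -/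
def msqrt (A : Matrix n n ℂ) : Matrix n n ℂ :=
  letI := Classical.dec A.PosSemidef
  if h : A.PosSemidef then
    h.1.eigenvectorUnitary.1 * Matrix.diagonal ((↑) ∘ (Real.sqrt ∘ h.1.eigenvalues)) *
      (star h.1.eigenvectorUnitary : Matrix n n ℂ)
  else 0

/-- Trace norm `‖A‖₁ = Tr √(AᴴA)`. -/
def traceNorm (A : Matrix n n ℂ) : ℝ :=
  ((msqrt (Aᴴ * A)).trace).re

/-- Trace distance `D(ρ,σ) = ½‖ρ-σ‖₁`. -/
def traceDist (ρ σ : Matrix n n ℂ) : ℝ := traceNorm (ρ - σ) / 2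

/-- Fidelity `F(ρ,σ) = Tr √(√ρ σ √ρ)`. -/
def fidelity (ρ σ : Matrix n n ℂ) : ℝ :=
  ((msqrt (msqrt ρ * σ * msqrt ρ)).trace).re

/-- Density matrix predicate. -/
def IsDensity (ρ : Matrix n n ℂ) : Prop := ρ.PosSemidef ∧ ρ.trace = 1

/-- Projector `|v⟩⟨v|` onto a vector. -/
def proj (v : n → ℂ) : Matrix n n ℂ := Matrix.of fun i j => v i * star (v j)

/-- Partial trace over the first (left) factor. -/
def traceLeft (ρ : Matrix (m × n) (m × n) ℂ) : Matrix n n ℂ :=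
  Matrix.of fun i j => ∑ k, ρ (k, i) (k, j)

/-- Partial trace over the second (right) factor. -/
def traceRight (ρ : Matrix (m × n) (m × n) ℂ) : Matrix m m ℂ :=
  Matrix.of fun i j => ∑ k, ρ (i, k) (j, k)

/-- The swap operator `S|αβ⟩ = |βα⟩` on `ℂ^d ⊗ ℂ^d`. -/
def swap (d : ℕ) : Matrix (Fin d × Fin d) (Fin d × Fin d) ℂ :=
  Matrix.of fun p q => if p.1 = q.2 ∧ p.2 = q.1 then 1 else 0

/-- Projection onto the symmetric subspace, `P_s = (I + S)/2`. -/
def Psym (d : ℕ) : Matrix (Fin d × Fin d) (Fin d × Fin d) ℂ := (2:ℂ)⁻¹ • (1 + swap d)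

/-- Projection onto the antisymmetric subspace, `P_as = (I - S)/2`. -/
def Pasym (d : ℕ) : Matrix (Fin d × Fin d) (Fin d × Fin d) ℂ := (2:ℂ)⁻¹ • (1 - swap d)

/-- `ρAB` is a quantum coupling of `ρA` and `ρB`. -/
def IsCoupling (ρAB : Matrix (m × n) (m × n) ℂ) (ρA : Matrix m m ℂ)
    (ρB : Matrix n n ℂ) : Prop :=
  IsDensity ρAB ∧ traceRight ρAB = ρA ∧ traceLeft ρAB = ρB

/-- The maximally entangled vector `|Φ⟩ = (1/√d) ∑ᵢ |i⟩|i⟩`. -/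
def maxEnt (d : ℕ) : Fin d × Fin d → ℂ :=
  fun p => if p.1 = p.2 then ((1 / Real.sqrt d : ℝ) : ℂ) else 0

theorem stmt6 (μ : ℝ) (hμ0 : 0 ≤ μ) (hμ1 : μ ≤ 1)
    (ψ : Fin 2 × Fin 2 → ℂ)
    (hψ : ψ = fun p =>
      if p = (0, 1) then ((Real.sqrt ((1 - μ) / 2) + Real.sqrt (μ / 2) : ℝ) : ℂ)
      else if p = (1, 0) then ((Real.sqrt ((1 - μ) / 2) - Real.sqrt (μ / 2) : ℝ) : ℂ)
      else 0) :
    (Psym 2 * proj ψ).trace = ((1 - μ : ℝ) : ℂ) ∧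
    (Pasym 2 * proj ψ).trace = ((μ : ℝ) : ℂ) ∧
    traceDist (traceRight (proj ψ)) (traceLeft (proj ψ))
      = 2 * Real.sqrt (μ * (1 - μ)) := by
  set a := Real.sqrt ((1 - μ) / 2) with ha
  set b := Real.sqrt (μ / 2) with hb
  have ha0 : 0 ≤ a := Real.sqrt_nonneg _
  have hb0 : 0 ≤ b := Real.sqrt_nonneg _
  have ha2 : a ^ 2 = (1 - μ) / 2 := Real.sq_sqrt (by linarith)
  have hb2 : b ^ 2 = μ / 2 := Real.sq_sqrt (by linarith)
  have ha2' : (a:ℂ)^2 = (1 - (μ:ℂ))/2 := by exact_mod_cast congrArg Complex.ofReal ha2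
  have hb2' : (b:ℂ)^2 = (μ:ℂ)/2 := by exact_mod_cast congrArg Complex.ofReal hb2
  have hab : Real.sqrt (μ * (1 - μ)) = 2 * (a * b) := by
    rw [show μ * (1 - μ) = (2 * (a * b))^2 by linear_combination (-(4*b^2))*ha2 - (2*(1-μ))*hb2]
    exact Real.sqrt_sq (by positivity)
  refine ⟨?_, ?_, ?_⟩
  · simp only [Matrix.trace, Matrix.diag, Matrix.mul_apply, Fintype.sum_prod_type,
      Fin.sum_univ_two, Psym, swap, proj, hψ, Matrix.of_apply, Matrix.smul_apply,
      Matrix.add_apply, Matrix.one_apply, Prod.mk.injEq]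
    norm_num
    linear_combination (2:ℂ) * ha2'
  · simp only [Matrix.trace, Matrix.diag, Matrix.mul_apply, Fintype.sum_prod_type,
      Fin.sum_univ_two, Pasym, swap, proj, hψ, Matrix.of_apply, Matrix.smul_apply,
      Matrix.sub_apply, Matrix.one_apply, Prod.mk.injEq]
    norm_num
    linear_combination (2:ℂ) * hb2'
  · set c : ℝ := 4 * (a * b) with hc
    have hc0 : 0 ≤ c := by positivity
    set ρd : Matrix (Fin 2) (Fin 2) ℂ := traceRight (proj ψ) - traceLeft (proj ψ) with hρdd
    have hρd : ρd = Matrix.diagonal ![(c:ℂ), -(c:ℂ)] := by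
      ext i j
      fin_cases i <;> fin_cases j <;>
        simp [hρdd, traceRight, traceLeft, proj, hψ, Fin.sum_univ_two, hc,
          Prod.mk.injEq] <;> push_cast <;> ring
    have hsq : (Matrix.diagonal ![(c:ℂ), (c:ℂ)])^2 = ρdᴴ * ρd := by
      rw [hρd]
      ext i j
      fin_cases i <;> fin_cases j <;>
        simp [pow_two, Matrix.mul_apply, Fin.sum_univ_two, Matrix.conjTranspose_apply] <;>
        push_cast <;> ring
    have hPSDd : (Matrix.diagonal ![(c:ℂ), (c:ℂ)]).PosSemidef := by
      refine Matrix.posSemidef_diagonal_iff.mpr fun i => ?_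
      fin_cases i <;> simpa using Complex.zero_le_real.mpr hc0
    have hPSD : (ρdᴴ * ρd).PosSemidef := hsq ▸ hPSDd.pow 2
    have hmsqrt : msqrt (ρdᴴ * ρd) = Matrix.diagonal ![(c:ℂ), (c:ℂ)] := by
      rw [msqrt]
      rw [dif_pos hPSD]
      have hA : ρdᴴ * ρd = ((c:ℂ)^2) • (1 : Matrix (Fin 2) (Fin 2) ℂ) := by
        rw [← hsq]; ext i j; fin_cases i <;> fin_cases j <;> simp [pow_two, Matrix.mul_apply, Fin.sum_univ_two]
      obtain ⟨U, hU⟩ : ∃ U, U = hPSD.1.eigenvectorUnitary := ⟨_, rfl⟩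
      obtain ⟨ev, hev⟩ : ∃ ev, ev = hPSD.1.eigenvalues := ⟨_, rfl⟩
      have hD := hPSD.1.conjStarAlgAut_star_eigenvectorUnitary
      rw [← hU, ← hev] at hD ⊢
      rw [hA] at hD
      simp only [Unitary.conjStarAlgAut_apply, star_star, Matrix.mul_smul, mul_one, Matrix.smul_mul,
        Unitary.coe_star, Unitary.star_mul_self_of_mem U.2] at hD
      have heig : ∀ i, ev i = c^2 := by
        intro i
        have := congrFun (congrFun hD i) i
        simp only [Matrix.smul_apply, Matrix.one_apply_eq, Matrix.diagonal_apply_eq,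
          Function.comp_apply, smul_eq_mul, mul_one] at this
        apply Complex.ofReal_injective
        push_cast
        exact this.symm
      have hdiag : Matrix.diagonal ((↑) ∘ (Real.sqrt ∘ ev)) = (c:ℂ) • (1 : Matrix (Fin 2) (Fin 2) ℂ) := by
        ext i j
        simp only [Matrix.diagonal_apply, Function.comp_apply, heig, Real.sqrt_sq hc0,
          Matrix.smul_apply, Matrix.one_apply, smul_eq_mul, mul_ite, mul_one, mul_zero]
      rw [hdiag, Matrix.mul_smul, mul_one, Matrix.smul_mul, Unitary.mul_star_self_of_mem U.2]
      ext i j; fin_cases i <;> fin_cases j <;> simp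
    have : traceDist (traceRight (proj ψ)) (traceLeft (proj ψ)) = c := by
      rw [traceDist, traceNorm, ← hρdd, hmsqrt, Matrix.trace_diagonal, Fin.sum_univ_two]
      simp
    rw [this, hab, hc]
    ring
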